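/- The bilateral forward weighted shift T on ℓ²(ℤ) with weights w_n = 1/3 for n ≥ 0 and w_n = 1/2 for n < 0 is supercyclic but not diskcyclic. -/

import Mathlib

open Filter Topology Pointwise

/-- The disk orbit of `x` under `T`: `{α • Tⁿ x : n ≥ 0, α ∈ ℂ, |α| ≤ 1}`. -/
def diskOrbit {H : Type*} [NormedAddCommGroup H] [NormedSpace ℂ H]
    (T : H →L[ℂ] H) (x : H) : Set H :=
  {y | ∃ (n : ℕ) (α : ℂ), ‖α‖ ≤ 1 ∧ y = α • (T ^ n) x}

/-- An operator is diskcyclic if some vector has dense disk orbit. -/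
def DiskCyclic {H : Type*} [NormedAddCommGroup H] [NormedSpace ℂ H]
    (T : H →L[ℂ] H) : Prop :=
  ∃ x : H, Dense (diskOrbit T x)

/-- `T` is supercyclic if some vector has dense scaled orbit. -/
def Supercyclic {H : Type*} [NormedAddCommGroup H] [NormedSpace ℂ H]
    (T : H →L[ℂ] H) : Prop :=
  ∃ x : H, Dense {y | ∃ (n : ℕ) (lam : ℂ), y = lam • (T ^ n) x}

noncomputable section
namespace St13
abbrev Hs := lp (fun _ : ℤ => ℂ) 2

lemma single_sub (i : ℤ) (a b : ℂ) :
    lp.single (E := fun _ : ℤ => ℂ) 2 i (a - b)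
      = lp.single (E := fun _ : ℤ => ℂ) 2 i a - lp.single (E := fun _ : ℤ => ℂ) 2 i b := by
  apply lp.ext
  funext j
  rw [lp.coeFn_sub, Pi.sub_apply]
  by_cases h : j = i
  · subst h; simp [lp.single_apply_self]
  · simp [lp.single_apply_ne _ _ _ h]

lemma norm_single' (i : ℤ) (a : ℂ) : ‖lp.single (E := fun _ : ℤ => ℂ) 2 i a‖ = ‖a‖ :=
  lp.norm_single (E := fun _ : ℤ => ℂ) (by norm_num) i a

set_option maxHeartbeats 1200000 in
/-- A countable family of finitely-supported vectors that approximates every vector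
with arbitrarily large indices. -/
lemma arith1 (c ε : ℝ) (hc : 0 < c) : c * (ε / (4 * c)) = ε / 4 := by
  field_simp

lemma exists_dense_family : ∃ (f : ℕ → Hs) (N : ℕ → ℕ),
    (∀ k, ∀ i : ℤ, ((N k : ℤ) < |i| → (f k : ∀ _:ℤ, ℂ) i = 0)) ∧
    (∀ (y : Hs) (ε : ℝ), 0 < ε → ∀ M : ℕ, ∃ k, M ≤ k ∧ ‖f k - y‖ < ε) := by
  obtain ⟨D, hDc, hDd⟩ := TopologicalSpace.exists_countable_dense ℂ
  haveI := hDc.to_subtype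
  obtain ⟨d₀, hd₀⟩ : D.Nonempty := hDd.nonempty
  haveI : Countable (Σ s : Finset ℤ, ({ i // i ∈ s } → D)) := by infer_instance
  haveI : Infinite (Σ s : Finset ℤ, ({ i // i ∈ s } → D)) := by
    refine Infinite.of_injective
      (fun n : ℕ => (⟨{(n:ℤ)}, fun _ => ⟨d₀, hd₀⟩⟩ : Σ s : Finset ℤ, ({ i // i ∈ s } → D))) ?_
    intro n m h
    have := congrArg Sigma.fst h
    simp only [Finset.singleton_inj, Int.natCast_inj] at this
    exact this
  haveI : Denumerable (Σ s : Finset ℤ, ({ i // i ∈ s } → D)) :=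
    (nonempty_denumerable _).some
  set e := Denumerable.eqv (Σ s : Finset ℤ, ({ i // i ∈ s } → D)) with he
  -- the family
  set g : (Σ s : Finset ℤ, ({ i // i ∈ s } → D)) → ℤ → ℂ :=
    fun z i => if h : i ∈ z.1 then (z.2 ⟨i, h⟩ : ℂ) else 0 with hg
  set F : (Σ s : Finset ℤ, ({ i // i ∈ s } → D)) → Hs :=
    fun z => ∑ i ∈ z.1, lp.single 2 i (g z i) with hF
  have hFapp : ∀ z (j : ℤ), (F z : ∀ _:ℤ, ℂ) j = g z j := by
    intro z j
    rw [hF]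
    simp only [lp.coeFn_sum, Finset.sum_apply]
    by_cases h : j ∈ z.1
    · rw [Finset.sum_eq_single j]
      · exact lp.single_apply_self 2 j _
      · intro b _ hbj
        exact lp.single_apply_ne 2 b _ (Ne.symm hbj)
      · intro hj; exact absurd h hj
    · rw [Finset.sum_eq_zero]
      · rw [hg]; simp [h]
      · intro b hb
        exact lp.single_apply_ne 2 b _ (fun hjb => h (hjb ▸ hb))
  refine ⟨fun k => F (e.symm k), fun k => (e.symm k).1.sup Int.natAbs, ?_, ?_⟩
  · intro k i hi
    dsimp only at hi
    rw [Int.abs_eq_natAbs] at hi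
    rw [hFapp, hg]
    have hni : i ∉ (e.symm k).1 := by
      intro hmem
      have := Finset.le_sup (f := Int.natAbs) hmem
      omega
    simp [hni]
  · intro y ε hε M
    have hsum := lp.hasSum_single (E := fun _ : ℤ => ℂ) (p := 2) (by norm_num) y
    rw [HasSum, Metric.tendsto_nhds] at hsum
    obtain ⟨s₀, hs₀⟩ := (Filter.eventually_atTop).1 (hsum (ε/2) (by linarith))
    set δ := ε / (4 * (s₀.card + 1)) with hδ
    have hδpos : 0 < δ := by positivity
    have hq : ∀ i : ℤ, ∃ c : D, ‖(y : ∀ _:ℤ, ℂ) i - (c : ℂ)‖ < δ := by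
      intro i
      obtain ⟨c, hc1, hc2⟩ := Metric.dense_iff.1 hDd ((y : ∀ _:ℤ, ℂ) i) δ hδpos
      exact ⟨⟨c, hc2⟩, by rw [← dist_eq_norm]; exact Metric.mem_ball'.1 hc1⟩
    choose q hq using hq
    set z₀ : ℤ := ((s₀.sup Int.natAbs : ℕ) : ℤ) + 1 with hz₀
    have hz₀mem : ∀ t : ℕ, z₀ + t ∉ s₀ := by
      intro t hmem
      have := Finset.le_sup (f := Int.natAbs) hmem
      omega
    set zt : ℕ → (Σ s : Finset ℤ, ({ i // i ∈ s } → D)) :=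
      fun t => ⟨insert (z₀ + t) s₀, fun i => q i⟩ with hzt
    -- the set of codes is infinite
    have hinf : (Set.range (fun t => e (zt t))).Infinite := by
      apply Set.infinite_range_of_injective
      intro t t' h
      have h2 : zt t = zt t' := e.injective h
      have h3 : insert (z₀ + (t:ℤ)) s₀ = insert (z₀ + (t':ℤ)) s₀ := congrArg Sigma.fst h2
      have h4 : z₀ + (t:ℤ) ∈ insert (z₀ + (t':ℤ)) s₀ := by
        rw [← h3]; exact Finset.mem_insert_self _ _
      rcases Finset.mem_insert.1 h4 with h5 | h5
      · omega
      · exact absurd h5 (hz₀mem t)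
    obtain ⟨k, hkmem, hkM⟩ := hinf.exists_gt M
    obtain ⟨t, ht⟩ := hkmem
    refine ⟨k, hkM.le, ?_⟩
    -- estimate
    have hFz : F (e.symm k) = F (zt t) := by rw [← ht, Equiv.symm_apply_apply]
    have hsub : s₀ ⊆ (zt t).1 := Finset.subset_insert _ _
    have htr : ‖(∑ i ∈ (zt t).1, lp.single (E := fun _ : ℤ => ℂ) 2 i ((y : ∀ _:ℤ, ℂ) i)) - y‖
        < ε/2 := by
      have := hs₀ (zt t).1 hsub
      rw [dist_eq_norm] at this
      exact this
    have hcard : ((zt t).1.card : ℝ) ≤ (s₀.card : ℝ) + 1 := by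
      have := Finset.card_insert_le (z₀ + (t:ℤ)) s₀
      exact_mod_cast this
    have happrox : ‖F (zt t) - ∑ i ∈ (zt t).1, lp.single (E := fun _ : ℤ => ℂ) 2 i ((y : ∀ _:ℤ, ℂ) i)‖
        ≤ ((s₀.card : ℝ) + 1) * δ := by
      rw [hF]
      rw [← Finset.sum_sub_distrib]
      refine le_trans (norm_sum_le _ _) ?_
      have hterm : ∀ i ∈ (zt t).1,
          ‖lp.single (E := fun _ : ℤ => ℂ) 2 i (g (zt t) i)
            - lp.single (E := fun _ : ℤ => ℂ) 2 i ((y : ∀ _:ℤ, ℂ) i)‖ ≤ δ := by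
        intro i hi
        rw [← single_sub, norm_single']
        have : g (zt t) i = (q i : ℂ) := by rw [hg]; simp [hi]; rfl
        rw [this, norm_sub_rev]
        exact (hq i).le
      calc ∑ i ∈ (zt t).1, ‖lp.single (E := fun _ : ℤ => ℂ) 2 i (g (zt t) i)
            - lp.single (E := fun _ : ℤ => ℂ) 2 i ((y : ∀ _:ℤ, ℂ) i)‖
          ≤ ∑ _i ∈ (zt t).1, δ := Finset.sum_le_sum hterm
        _ = ((zt t).1.card : ℝ) * δ := by rw [Finset.sum_const, nsmul_eq_mul]
        _ ≤ ((s₀.card : ℝ) + 1) * δ := mul_le_mul_of_nonneg_right hcard hδpos.le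
    have hδsum : ((s₀.card : ℝ) + 1) * δ < ε/2 := by
      have h1 : (0:ℝ) < (s₀.card : ℝ) + 1 := by
        have := Nat.cast_nonneg (α := ℝ) s₀.card
        linarith
      have h2 : ((s₀.card : ℝ) + 1) * δ = ε/4 := arith1 _ _ h1
      rw [h2]; linarith
    calc ‖F (e.symm k) - y‖
        = ‖(F (zt t) - ∑ i ∈ (zt t).1, lp.single (E := fun _ : ℤ => ℂ) 2 i ((y : ∀ _:ℤ, ℂ) i))
            + ((∑ i ∈ (zt t).1, lp.single (E := fun _ : ℤ => ℂ) 2 i ((y : ∀ _:ℤ, ℂ) i)) - y)‖ := by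
          rw [hFz]; congr 1; abel
      _ ≤ ‖F (zt t) - ∑ i ∈ (zt t).1, lp.single (E := fun _ : ℤ => ℂ) 2 i ((y : ∀ _:ℤ, ℂ) i)‖
            + ‖(∑ i ∈ (zt t).1, lp.single (E := fun _ : ℤ => ℂ) 2 i ((y : ∀ _:ℤ, ℂ) i)) - y‖ :=
          norm_add_le _ _
      _ < ((s₀.card : ℝ) + 1) * δ + ε/2 := by
          apply add_lt_add_of_le_of_lt happrox htr
      _ < ε/2 + ε/2 := by linarith
      _ = ε := by ring


def w (m : ℤ) : ℂ := if 0 ≤ m then 1/3 else 1/2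

lemma w_ne (m : ℤ) : w m ≠ 0 := by unfold w; split <;> norm_num
lemma norm_w_le (m : ℤ) : ‖w m‖ ≤ 1/2 := by unfold w; split <;> norm_num
lemma norm_w_inv_le (m : ℤ) : ‖(w m)⁻¹‖ ≤ 3 := by
  unfold w; split <;> simp <;> norm_num
lemma norm_w_pos (m : ℤ) (h : 0 ≤ m) : ‖w m‖ = 1/3 := by unfold w; rw [if_pos h]; norm_num
lemma norm_w_inv_neg (m : ℤ) (h : m < 0) : ‖(w m)⁻¹‖ = 2 := by
  unfold w; rw [if_neg (not_le.2 h)]; norm_num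

lemma sum_sq (y : Hs) : Summable (fun m : ℤ => ‖(y : ∀ _:ℤ, ℂ) m‖ ^ (2:ℝ)) := by
  have := lp.memℓp y
  rw [memℓp_gen_iff (E := fun _ : ℤ => ℂ) (by norm_num : (0:ℝ) < (2:ENNReal).toReal)] at this
  simpa using this

lemma sum_sq_shift (y : Hs) (d : ℤ) :
    Summable (fun m : ℤ => ‖(y : ∀ _:ℤ, ℂ) (m + d)‖ ^ (2:ℝ)) :=
  ((Equiv.addRight d).summable_iff (f := fun m : ℤ => ‖(y : ∀ _:ℤ, ℂ) m‖ ^ (2:ℝ))).2 (sum_sq y)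

lemma tsum_sq_shift (y : Hs) (d : ℤ) :
    ∑' m : ℤ, ‖(y : ∀ _:ℤ, ℂ) (m + d)‖ ^ (2:ℝ) = ∑' m : ℤ, ‖(y : ∀ _:ℤ, ℂ) m‖ ^ (2:ℝ) :=
  (Equiv.addRight d).tsum_eq (f := fun m : ℤ => ‖(y : ∀ _:ℤ, ℂ) m‖ ^ (2:ℝ))

/-- Core comparison lemma. -/
lemma norm_le_shift (z y : Hs) (c : ℝ) (hc : 0 ≤ c) (d : ℤ)
    (h : ∀ m, ‖(z : ∀ _:ℤ, ℂ) m‖ ≤ c * ‖(y : ∀ _:ℤ, ℂ) (m + d)‖) : ‖z‖ ≤ c * ‖y‖ := by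
  have h2 : ‖z‖ ^ (2:ℝ) = ∑' m, ‖(z : ∀ _:ℤ, ℂ) m‖ ^ (2:ℝ) := by
    simpa using lp.norm_rpow_eq_tsum (p := 2) (by norm_num) z
  have h3 : ‖y‖ ^ (2:ℝ) = ∑' m, ‖(y : ∀ _:ℤ, ℂ) m‖ ^ (2:ℝ) := by
    simpa using lp.norm_rpow_eq_tsum (p := 2) (by norm_num) y
  rw [← Real.rpow_le_rpow_iff (norm_nonneg _) (by positivity) (by norm_num : (0:ℝ) < 2)]
  have step : ∀ m : ℤ, ‖(z : ∀ _:ℤ, ℂ) m‖ ^ (2:ℝ)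
      ≤ c ^ (2:ℝ) * ‖(y : ∀ _:ℤ, ℂ) (m + d)‖ ^ (2:ℝ) := by
    intro m
    calc ‖(z : ∀ _:ℤ, ℂ) m‖ ^ (2:ℝ) ≤ (c * ‖(y : ∀ _:ℤ, ℂ) (m + d)‖) ^ (2:ℝ) := by
          apply Real.rpow_le_rpow (norm_nonneg _) (h m) (by norm_num)
      _ = c ^ (2:ℝ) * ‖(y : ∀ _:ℤ, ℂ) (m + d)‖ ^ (2:ℝ) := Real.mul_rpow hc (norm_nonneg _)
  have hmul : ∑' m : ℤ, c ^ (2:ℝ) * ‖(y : ∀ _:ℤ, ℂ) (m + d)‖ ^ (2:ℝ)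
      = c ^ (2:ℝ) * ∑' m : ℤ, ‖(y : ∀ _:ℤ, ℂ) (m + d)‖ ^ (2:ℝ) :=
    tsum_mul_left
  calc ‖z‖ ^ (2:ℝ) = ∑' m, ‖(z : ∀ _:ℤ, ℂ) m‖ ^ (2:ℝ) := h2
    _ ≤ ∑' m : ℤ, c ^ (2:ℝ) * ‖(y : ∀ _:ℤ, ℂ) (m + d)‖ ^ (2:ℝ) :=
        Summable.tsum_le_tsum step (sum_sq z) ((sum_sq_shift y d).mul_left _)
    _ = c ^ (2:ℝ) * ∑' m : ℤ, ‖(y : ∀ _:ℤ, ℂ) (m + d)‖ ^ (2:ℝ) := hmul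
    _ = c ^ (2:ℝ) * ∑' m : ℤ, ‖(y : ∀ _:ℤ, ℂ) m‖ ^ (2:ℝ) := by rw [tsum_sq_shift]
    _ = (c * ‖y‖) ^ (2:ℝ) := by rw [Real.mul_rpow hc (norm_nonneg _), h3]

def Aop (y : Hs) : Hs :=
  ⟨fun m => (w m)⁻¹ * (y : ∀ _:ℤ, ℂ) (m + 1), by
    apply memℓp_gen
    have : (2:ENNReal).toReal = (2:ℝ) := by norm_num
    rw [this]
    refine Summable.of_nonneg_of_le (fun m => by positivity) (fun m => ?_)
      ((sum_sq_shift y 1).mul_left ((3:ℝ) ^ (2:ℝ)))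
    rw [← Real.mul_rpow (by norm_num) (norm_nonneg _)]
    apply Real.rpow_le_rpow (norm_nonneg _) ?_ (by norm_num)
    rw [norm_mul]
    exact mul_le_mul_of_nonneg_right (norm_w_inv_le m) (norm_nonneg _)⟩

lemma Aop_apply (y : Hs) (m : ℤ) : (Aop y : ∀ _:ℤ, ℂ) m = (w m)⁻¹ * (y : ∀ _:ℤ, ℂ) (m + 1) := rfl


variable (T : Hs →L[ℂ] Hs)
variable (hT : ∀ (x : Hs) (n : ℤ),
      (T x : ∀ _ : ℤ, ℂ) n = ((if 0 ≤ n - 1 then (1/3 : ℂ) else 1/2) * (x : ∀ _ : ℤ, ℂ) (n - 1)))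

include hT

lemma T_apply (y : Hs) (m : ℤ) : (T y : ∀ _:ℤ, ℂ) m = w (m-1) * (y : ∀ _:ℤ, ℂ) (m-1) := hT y m

lemma T_Aop (y : Hs) : T (Aop y) = y := by
  apply lp.ext
  funext m
  rw [T_apply T hT, Aop_apply, ← mul_assoc, mul_inv_cancel₀ (w_ne _), one_mul,
    sub_add_cancel]

omit hT in
lemma pow_apply (n : ℕ) (y : Hs) : (T ^ (n+1)) y = (T ^ n) (T y) := by
  rw [pow_succ]; rfl

lemma T_pow_Aop_iter (n : ℕ) (y : Hs) : (T ^ n) (Aop^[n] y) = y := by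
  induction n generalizing y with
  | zero => simp
  | succ n ih =>
      rw [Function.iterate_succ_apply', pow_apply T, T_Aop T hT, ih]

lemma normT (y : Hs) : ‖T y‖ ≤ (1/2) * ‖y‖ := by
  refine norm_le_shift _ y _ (by norm_num) (-1) (fun m => ?_)
  rw [T_apply T hT, norm_mul]
  have : m + -1 = m - 1 := by ring
  rw [this]
  exact mul_le_mul_of_nonneg_right (norm_w_le _) (norm_nonneg _)

lemma normT_pos (y : Hs) (h : ∀ i < (0:ℤ), (y : ∀ _:ℤ, ℂ) i = 0) :
    ‖T y‖ ≤ (1/3) * ‖y‖ := by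
  refine norm_le_shift _ y _ (by norm_num) (-1) (fun m => ?_)
  have hm : m + -1 = m - 1 := by ring
  rw [T_apply T hT, norm_mul, hm]
  rcases le_or_gt 0 (m - 1) with h1 | h1
  · exact mul_le_mul_of_nonneg_right (le_of_eq (norm_w_pos _ h1)) (norm_nonneg _)
  · rw [h _ h1]; simp

lemma suppT (y : Hs) (c : ℤ) (h : ∀ i < c, (y : ∀ _:ℤ, ℂ) i = 0) :
    ∀ i < c + 1, (T y : ∀ _:ℤ, ℂ) i = 0 := by
  intro i hi
  rw [T_apply T hT, h _ (by omega), mul_zero]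

omit hT in
lemma normA (y : Hs) : ‖Aop y‖ ≤ 3 * ‖y‖ := by
  refine norm_le_shift _ y _ (by norm_num) 1 (fun m => ?_)
  rw [Aop_apply, norm_mul]
  exact mul_le_mul_of_nonneg_right (norm_w_inv_le _) (norm_nonneg _)

omit hT in
lemma normA_neg (y : Hs) (h : ∀ i > (0:ℤ), (y : ∀ _:ℤ, ℂ) i = 0) :
    ‖Aop y‖ ≤ 2 * ‖y‖ := by
  refine norm_le_shift _ y _ (by norm_num) 1 (fun m => ?_)
  rw [Aop_apply, norm_mul]
  rcases lt_or_ge m 0 with h1 | h1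
  · exact mul_le_mul_of_nonneg_right (le_of_eq (norm_w_inv_neg _ h1)) (norm_nonneg _)
  · rw [h _ (by omega)]; simp

omit hT in
lemma suppA (y : Hs) (c : ℤ) (h : ∀ i > c, (y : ∀ _:ℤ, ℂ) i = 0) :
    ∀ i > c - 1, (Aop y : ∀ _:ℤ, ℂ) i = 0 := by
  intro i hi
  rw [Aop_apply, h _ (by omega), mul_zero]

lemma suppT_iter (n : ℕ) (y : Hs) (c : ℤ) (h : ∀ i < c, (y : ∀ _:ℤ, ℂ) i = 0) :
    ∀ i < c + n, ((T ^ n) y : ∀ _:ℤ, ℂ) i = 0 := by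
  induction n generalizing y c with
  | zero => simpa using h
  | succ n ih =>
      intro i hi
      rw [pow_apply T]
      refine ih (T y) (c+1) (suppT T hT y c h) i ?_
      push_cast at hi ⊢
      omega

omit hT in
lemma suppA_iter (n : ℕ) (y : Hs) (c : ℤ) (h : ∀ i > c, (y : ∀ _:ℤ, ℂ) i = 0) :
    ∀ i > c - n, (Aop^[n] y : ∀ _:ℤ, ℂ) i = 0 := by
  induction n generalizing y c with
  | zero => simpa using h
  | succ n ih =>
      intro i hi
      rw [Function.iterate_succ_apply]
      refine ih (Aop y) (c-1) (suppA y c h) i ?_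
      push_cast at hi ⊢
      omega

lemma normT_pow (n : ℕ) (y : Hs) : ‖(T ^ n) y‖ ≤ (1/2:ℝ) ^ n * ‖y‖ := by
  induction n generalizing y with
  | zero => simp
  | succ n ih =>
      rw [pow_apply T]
      calc ‖(T ^ n) (T y)‖ ≤ (1/2:ℝ)^n * ‖T y‖ := ih (T y)
        _ ≤ (1/2:ℝ)^n * ((1/2) * ‖y‖) :=
            mul_le_mul_of_nonneg_left (normT T hT y) (by positivity)
        _ = (1/2:ℝ)^(n+1) * ‖y‖ := by ring

lemma normT_pow_pos (n : ℕ) (y : Hs) (h : ∀ i < (0:ℤ), (y : ∀ _:ℤ, ℂ) i = 0) :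
    ‖(T ^ n) y‖ ≤ (1/3:ℝ) ^ n * ‖y‖ := by
  induction n generalizing y with
  | zero => simp
  | succ n ih =>
      rw [pow_apply T]
      have hs : ∀ i < (0:ℤ), (T y : ∀ _:ℤ, ℂ) i = 0 := fun i hi =>
        suppT T hT y 0 h i (by omega)
      calc ‖(T ^ n) (T y)‖ ≤ (1/3:ℝ)^n * ‖T y‖ := ih (T y) hs
        _ ≤ (1/3:ℝ)^n * ((1/3) * ‖y‖) :=
            mul_le_mul_of_nonneg_left (normT_pos T hT y h) (by positivity)
        _ = (1/3:ℝ)^(n+1) * ‖y‖ := by ring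

omit hT in
lemma normA_iter_neg (n : ℕ) (y : Hs) (h : ∀ i > (0:ℤ), (y : ∀ _:ℤ, ℂ) i = 0) :
    ‖Aop^[n] y‖ ≤ (2:ℝ) ^ n * ‖y‖ := by
  induction n generalizing y with
  | zero => simp
  | succ n ih =>
      rw [Function.iterate_succ_apply]
      have hs : ∀ i > (0:ℤ), (Aop y : ∀ _:ℤ, ℂ) i = 0 := fun i hi =>
        suppA y 0 h i (by omega)
      calc ‖Aop^[n] (Aop y)‖ ≤ (2:ℝ)^n * ‖Aop y‖ := ih (Aop y) hs
        _ ≤ (2:ℝ)^n * (2 * ‖y‖) :=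
            mul_le_mul_of_nonneg_left (normA_neg y h) (by positivity)
        _ = (2:ℝ)^(n+1) * ‖y‖ := by ring

omit hT in
lemma normA_iter (n : ℕ) (y : Hs) : ‖Aop^[n] y‖ ≤ (3:ℝ) ^ n * ‖y‖ := by
  induction n generalizing y with
  | zero => simp
  | succ n ih =>
      rw [Function.iterate_succ_apply]
      calc ‖Aop^[n] (Aop y)‖ ≤ (3:ℝ)^n * ‖Aop y‖ := ih (Aop y)
        _ ≤ (3:ℝ)^n * (3 * ‖y‖) :=
            mul_le_mul_of_nonneg_left (normA y) (by positivity)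
        _ = (3:ℝ)^(n+1) * ‖y‖ := by ring

/-- Refined forward estimate. -/
lemma normT_pow_supp (N n : ℕ) (y : Hs) (h : ∀ i < -(N:ℤ), (y : ∀ _:ℤ, ℂ) i = 0) :
    ‖(T ^ n) y‖ ≤ (3/2:ℝ) ^ N * ((1/3:ℝ) ^ n * ‖y‖) := by
  rcases le_or_gt n N with hnN | hNn
  · calc ‖(T ^ n) y‖ ≤ (1/2:ℝ)^n * ‖y‖ := normT_pow T hT n y
      _ ≤ (3/2:ℝ)^N * ((1/3:ℝ)^n * ‖y‖) := by
          rw [← mul_assoc]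
          refine mul_le_mul_of_nonneg_right ?_ (norm_nonneg _)
          calc (1/2:ℝ)^n = (3/2:ℝ)^n * (1/3:ℝ)^n := by
                rw [← mul_pow]; norm_num
            _ ≤ (3/2:ℝ)^N * (1/3:ℝ)^n :=
                mul_le_mul_of_nonneg_right
                  (pow_le_pow_right₀ (by norm_num) hnN) (by positivity)
  · have hn : n - N + N = n := Nat.sub_add_cancel hNn.le
    have hsplit : (T ^ n) y = (T ^ (n - N)) ((T ^ N) y) := by
      rw [← ContinuousLinearMap.mul_apply, ← pow_add, hn]
    have hs : ∀ i < (0:ℤ), ((T ^ N) y : ∀ _:ℤ, ℂ) i = 0 := fun i hi =>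
      suppT_iter T hT N y (-(N:ℤ)) h i (by omega)
    calc ‖(T ^ n) y‖ = ‖(T ^ (n - N)) ((T ^ N) y)‖ := by rw [hsplit]
      _ ≤ (1/3:ℝ)^(n-N) * ‖(T ^ N) y‖ := normT_pow_pos T hT _ _ hs
      _ ≤ (1/3:ℝ)^(n-N) * ((1/2:ℝ)^N * ‖y‖) :=
          mul_le_mul_of_nonneg_left (normT_pow T hT N y) (by positivity)
      _ = (3/2:ℝ)^N * ((1/3:ℝ)^n * ‖y‖) := by
          have h1 : ((1:ℝ)/2)^N = (3/2:ℝ)^N * (1/3:ℝ)^N := by rw [← mul_pow]; norm_num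
          have h2 : (1/3:ℝ)^(n-N) * (1/3:ℝ)^N = (1/3:ℝ)^n := by rw [← pow_add, hn]
          rw [h1, ← h2]; ring

omit hT in
/-- Refined backward estimate. -/
lemma normA_iter_supp (N n : ℕ) (y : Hs) (h : ∀ i > (N:ℤ), (y : ∀ _:ℤ, ℂ) i = 0) :
    ‖Aop^[n] y‖ ≤ (3/2:ℝ) ^ N * ((2:ℝ) ^ n * ‖y‖) := by
  rcases le_or_gt n N with hnN | hNn
  · calc ‖Aop^[n] y‖ ≤ (3:ℝ)^n * ‖y‖ := normA_iter n y
      _ ≤ (3/2:ℝ)^N * ((2:ℝ)^n * ‖y‖) := by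
          rw [← mul_assoc]
          refine mul_le_mul_of_nonneg_right ?_ (norm_nonneg _)
          calc (3:ℝ)^n = (3/2:ℝ)^n * (2:ℝ)^n := by rw [← mul_pow]; norm_num
            _ ≤ (3/2:ℝ)^N * (2:ℝ)^n :=
                mul_le_mul_of_nonneg_right
                  (pow_le_pow_right₀ (by norm_num) hnN) (by positivity)
  · have hn : n - N + N = n := Nat.sub_add_cancel hNn.le
    have hsplit : Aop^[n] y = Aop^[n - N] (Aop^[N] y) := by
      rw [← Function.iterate_add_apply, hn]
    have hs : ∀ i > (0:ℤ), (Aop^[N] y : ∀ _:ℤ, ℂ) i = 0 := fun i hi =>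
      suppA_iter N y (N:ℤ) h i (by omega)
    calc ‖Aop^[n] y‖ = ‖Aop^[n - N] (Aop^[N] y)‖ := by rw [hsplit]
      _ ≤ (2:ℝ)^(n-N) * ‖Aop^[N] y‖ := normA_iter_neg _ _ hs
      _ ≤ (2:ℝ)^(n-N) * ((3:ℝ)^N * ‖y‖) :=
          mul_le_mul_of_nonneg_left (normA_iter N y) (by positivity)
      _ = (3/2:ℝ)^N * ((2:ℝ)^n * ‖y‖) := by
          have h1 : (3:ℝ)^N = (3/2:ℝ)^N * (2:ℝ)^N := by rw [← mul_pow]; norm_num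
          have h2 : (2:ℝ)^(n-N) * (2:ℝ)^N = (2:ℝ)^n := by rw [← pow_add, hn]
          rw [h1, ← h2]; ring

lemma T_pow_Aop_le (k j : ℕ) (hjk : j ≤ k) (y : Hs) :
    (T ^ k) (Aop^[j] y) = (T ^ (k - j)) y := by
  have hk : k - j + j = k := Nat.sub_add_cancel hjk
  conv_lhs => rw [← hk, pow_add, ContinuousLinearMap.mul_apply, T_pow_Aop_iter T hT]

lemma T_pow_Aop_ge (k j : ℕ) (hkj : k ≤ j) (y : Hs) :
    (T ^ k) (Aop^[j] y) = Aop^[j - k] y := by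
  have hj : j - k + k = j := Nat.sub_add_cancel hkj
  conv_lhs => rw [← hj, add_comm, Function.iterate_add_apply, T_pow_Aop_iter T hT]


lemma not_disk : ¬ DiskCyclic T := by
  rintro ⟨x, hx⟩
  have hb : ∀ z ∈ diskOrbit T x, ‖z‖ ≤ ‖x‖ := by
    rintro z ⟨m, α, hα, rfl⟩
    rw [norm_smul]
    have h1 : ‖(T ^ m) x‖ ≤ ‖x‖ := by
      calc ‖(T ^ m) x‖ ≤ (1/2:ℝ)^m * ‖x‖ := normT_pow T hT m x
        _ ≤ 1 * ‖x‖ := mul_le_mul_of_nonneg_right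
              (pow_le_one₀ (by norm_num) (by norm_num)) (norm_nonneg x)
        _ = ‖x‖ := one_mul _
    calc ‖α‖ * ‖(T ^ m) x‖ ≤ 1 * ‖(T ^ m) x‖ :=
          mul_le_mul_of_nonneg_right hα (norm_nonneg _)
      _ = ‖(T ^ m) x‖ := one_mul _
      _ ≤ ‖x‖ := h1
  set y : Hs := (((‖x‖ + 2 : ℝ)) : ℂ) • lp.single (E := fun _ : ℤ => ℂ) 2 (0:ℤ) (1:ℂ) with hy
  have hynorm : ‖y‖ = ‖x‖ + 2 := by
    rw [hy, norm_smul, norm_single', norm_one, mul_one, Complex.norm_real,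
      Real.norm_eq_abs, abs_of_pos (by positivity)]
  obtain ⟨z, hzball, hzorb⟩ := Metric.dense_iff.1 hx y 1 one_pos
  have h2 : ‖y‖ - ‖z‖ ≤ dist z y := by
    rw [dist_comm, dist_eq_norm]
    exact norm_sub_norm_le _ _
  have h3 := hb z hzorb
  have h4 := Metric.mem_ball.1 hzball
  rw [hynorm] at h2
  linarith

/-! ### The supercyclic vector -/

omit hT in
lemma norm_a (m : ℕ) : ‖(((2/5:ℝ)) : ℂ) ^ m‖ = (2/5:ℝ) ^ m := by
  rw [norm_pow, Complex.norm_real, Real.norm_eq_abs, abs_of_pos (by norm_num)]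

set_option maxHeartbeats 2000000 in
lemma supercyclic : Supercyclic T := by
  classical
  obtain ⟨f, N, hsupp, hdense⟩ := exists_dense_family
  have hsuppL : ∀ k, ∀ i < -((N k:ℕ):ℤ), (f k : ∀ _:ℤ, ℂ) i = 0 := by
    intro k i hi
    refine hsupp k i ?_
    have h1 := neg_abs_le i
    have h2 := le_abs_self i
    linarith
  have hsuppR : ∀ k, ∀ i > ((N k:ℕ):ℤ), (f k : ∀ _:ℤ, ℂ) i = 0 := by
    intro k i hi
    refine hsupp k i ?_
    have h1 := neg_abs_le i
    have h2 := le_abs_self i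
    linarith
  -- constants
  set C : ℕ → ℝ := fun j => (3/2:ℝ)^(N j) * (‖f j‖ + 1) with hC
  have hCpos : ∀ j, 0 < C j := by
    intro j
    have := norm_nonneg (f j)
    positivity
  set Cb : ℕ → ℝ := fun k => ∑ i ∈ Finset.range (k+1), C i with hCb
  have hCbpos : ∀ k, 0 < Cb k := by
    intro k
    refine Finset.sum_pos (fun i _ => hCpos i) ⟨0, Finset.mem_range.2 (by omega)⟩
  have hCle : ∀ j k, j ≤ k → C j ≤ Cb k := by
    intro j k hjk
    refine Finset.single_le_sum (fun i _ => (hCpos i).le) (Finset.mem_range.2 (by omega))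
  -- choose gaps
  have hg : ∀ k : ℕ, ∃ m : ℕ, Cb k * (5/6:ℝ)^m ≤ (1/2:ℝ)^k := by
    intro k
    obtain ⟨m, hm⟩ := exists_pow_lt_of_lt_one
      (div_pos (pow_pos (by norm_num : (0:ℝ) < 1/2) k) (hCbpos k)) (by norm_num : (5/6:ℝ) < 1)
    refine ⟨m, ?_⟩
    rw [mul_comm, ← le_div_iff₀ (hCbpos k)]
    exact hm.le
  choose g hgle using hg
  set n : ℕ → ℕ := fun k => ∑ i ∈ Finset.range (k+1), (1 + g i) with hn
  have hn_mono : ∀ j k, j ≤ k → n j ≤ n k := by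
    intro j k hjk
    exact Finset.sum_le_sum_of_subset (Finset.range_subset_range.2 (by omega))
  have hn_gap : ∀ j k, j < k → n j + g k ≤ n k := by
    intro j k hjk
    have h1 : n j + ∑ i ∈ Finset.Ico (j+1) (k+1), (1 + g i) = n k := by
      rw [hn]
      exact Finset.sum_range_add_sum_Ico _ (by omega)
    have h2 : g k ≤ ∑ i ∈ Finset.Ico (j+1) (k+1), (1 + g i) := by
      calc g k ≤ 1 + g k := by omega
        _ ≤ ∑ i ∈ Finset.Ico (j+1) (k+1), (1 + g i) :=
            Finset.single_le_sum (f := fun i => 1 + g i) (fun i _ => by omega)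
              (Finset.mem_Ico.2 (by omega))
    omega
  have hn_ge : ∀ k, g k ≤ n k := by
    intro k
    calc g k ≤ 1 + g k := by omega
      _ ≤ n k := Finset.single_le_sum (f := fun i => 1 + g i) (fun i _ => by omega)
            (Finset.mem_range.2 (by omega))
  -- scalars
  set a : ℕ → ℂ := fun j => (((2/5:ℝ)) : ℂ) ^ (n j) with ha
  have ha_ne : ∀ j, a j ≠ 0 := by
    intro j
    apply pow_ne_zero
    simp only [ne_eq, Complex.ofReal_eq_zero]
    norm_num
  have ha_norm : ∀ j, ‖a j‖ = (2/5:ℝ) ^ (n j) := fun j => norm_a (n j)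
  have ha_inv_norm : ∀ j, ‖(a j)⁻¹‖ = (5/2:ℝ) ^ (n j) := by
    intro j
    rw [norm_inv, ha_norm]
    rw [← inv_pow]
    norm_num
  -- the building blocks
  set u : ℕ → Hs := fun j => a j • Aop^[n j] (f j) with hu
  -- norm bound for u
  have hu_norm : ∀ j, ‖u j‖ ≤ (1/2:ℝ)^j := by
    intro j
    rw [hu]
    simp only []
    rw [norm_smul, ha_norm]
    calc (2/5:ℝ)^(n j) * ‖Aop^[n j] (f j)‖
        ≤ (2/5:ℝ)^(n j) * ((3/2:ℝ)^(N j) * ((2:ℝ)^(n j) * ‖f j‖)) := by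
          refine mul_le_mul_of_nonneg_left (normA_iter_supp (N j) (n j) (f j) (hsuppR j)) ?_
          positivity
      _ = (3/2:ℝ)^(N j) * ‖f j‖ * (4/5:ℝ)^(n j) := by
          rw [show (4/5:ℝ) = (2/5) * 2 by norm_num, mul_pow]
          ring
      _ ≤ C j * (5/6:ℝ)^(n j) := by
          refine mul_le_mul ?_ (pow_le_pow_left₀ (by norm_num) (by norm_num) _) (by positivity) (hCpos j).le
          rw [hC]
          refine mul_le_mul_of_nonneg_left (by linarith) (by positivity)
      _ ≤ Cb j * (5/6:ℝ)^(g j) := by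
          refine mul_le_mul (hCle j j le_rfl) ?_ (by positivity) (hCbpos j).le
          exact pow_le_pow_of_le_one (by norm_num) (by norm_num) (hn_ge j)
      _ ≤ (1/2:ℝ)^j := hgle j
  have hu_sum : Summable u := by
    refine Summable.of_norm ?_
    refine Summable.of_nonneg_of_le (fun j => norm_nonneg _) hu_norm ?_
    exact summable_geometric_of_lt_one (by norm_num) (by norm_num)
  -- the supercyclic vector
  set x : Hs := ∑' j, u j with hx
  refine ⟨x, ?_⟩
  -- the key error estimate
  have hkey : ∀ k : ℕ, ‖(a k)⁻¹ • (T ^ (n k)) x - f k‖ ≤ ((k:ℝ) + 2) * (1/2:ℝ)^k := by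
    intro k
    set G : Hs →L[ℂ] Hs := (a k)⁻¹ • (T ^ (n k)) with hG
    have hGapp : ∀ z : Hs, G z = (a k)⁻¹ • (T ^ (n k)) z := fun z => rfl
    have hGx : G x = ∑' j, G (u j) := by
      rw [hx]
      exact G.map_tsum hu_sum
    have hGsum : Summable (fun j => G (u j)) := hu_sum.mapL G
    -- the k-th term is exactly f k
    have hGu : ∀ j, G (u j) = (a j * (a k)⁻¹) • ((T ^ (n k)) (Aop^[n j] (f j))) := by
      intro j
      rw [hu]
      dsimp only
      rw [map_smul, hGapp, smul_smul]
    have hvk : G (u k) = f k := by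
      rw [hGu, mul_inv_cancel₀ (ha_ne k), one_smul, T_pow_Aop_iter T hT]
    -- bounds for the other terms
    have hvj : ∀ j, j ≠ k →
        ‖G (u j)‖ ≤ (if j ≤ k then (1/2:ℝ)^k else (1/2:ℝ)^j) := by
      intro j hjk
      rcases lt_or_gt_of_ne hjk with hlt | hgt
      · -- j < k : forward shift of f j
        have h2 : G (u j) = (a j * (a k)⁻¹) • ((T ^ (n k - n j)) (f j)) := by
          rw [hGu, T_pow_Aop_le T hT (n k) (n j) (hn_mono j k hlt.le) (f j)]
        rw [if_pos hlt.le, h2, norm_smul, norm_mul, ha_norm, ha_inv_norm]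
        have hd : g k ≤ n k - n j := by
          have := hn_gap j k hlt
          omega
        calc (2/5:ℝ)^(n j) * (5/2:ℝ)^(n k) * ‖(T ^ (n k - n j)) (f j)‖
            ≤ (2/5:ℝ)^(n j) * (5/2:ℝ)^(n k) *
                ((3/2:ℝ)^(N j) * ((1/3:ℝ)^(n k - n j) * ‖f j‖)) := by
              refine mul_le_mul_of_nonneg_left
                (normT_pow_supp T hT (N j) (n k - n j) (f j) (hsuppL j)) (by positivity)
          _ = (3/2:ℝ)^(N j) * ‖f j‖ * ((5/2:ℝ)^(n k - n j) * (1/3:ℝ)^(n k - n j)) := by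
              have hsplit : (5/2:ℝ)^(n k) = (5/2:ℝ)^(n k - n j) * (5/2:ℝ)^(n j) := by
                rw [← pow_add, Nat.sub_add_cancel (hn_mono j k hlt.le)]
              rw [hsplit]
              have hcancel : (5/2:ℝ)^(n j) * (2/5:ℝ)^(n j) = 1 := by
                rw [← mul_pow]
                norm_num
              field_simp
              linear_combination ‖f j‖ * hcancel
          _ = (3/2:ℝ)^(N j) * ‖f j‖ * (5/6:ℝ)^(n k - n j) := by
              rw [← mul_pow]
              norm_num
          _ ≤ C j * (5/6:ℝ)^(n k - n j) := by
              refine mul_le_mul_of_nonneg_right ?_ (by positivity)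
              rw [hC]
              refine mul_le_mul_of_nonneg_left (by linarith) (by positivity)
          _ ≤ Cb k * (5/6:ℝ)^(g k) := by
              refine mul_le_mul (hCle j k hlt.le) ?_ (by positivity) (hCbpos k).le
              exact pow_le_pow_of_le_one (by norm_num) (by norm_num) hd
          _ ≤ (1/2:ℝ)^k := hgle k
      · -- j > k : backward shift of f j
        have h2 : G (u j) = (a j * (a k)⁻¹) • (Aop^[n j - n k] (f j)) := by
          rw [hGu, T_pow_Aop_ge T hT (n k) (n j) (hn_mono k j hgt.le) (f j)]
        rw [if_neg (by omega), h2, norm_smul, norm_mul, ha_norm, ha_inv_norm]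
        have hd : g j ≤ n j - n k := by
          have := hn_gap k j hgt
          omega
        calc (2/5:ℝ)^(n j) * (5/2:ℝ)^(n k) * ‖Aop^[n j - n k] (f j)‖
            ≤ (2/5:ℝ)^(n j) * (5/2:ℝ)^(n k) *
                ((3/2:ℝ)^(N j) * ((2:ℝ)^(n j - n k) * ‖f j‖)) := by
              refine mul_le_mul_of_nonneg_left
                (normA_iter_supp (N j) (n j - n k) (f j) (hsuppR j)) (by positivity)
          _ = (3/2:ℝ)^(N j) * ‖f j‖ * ((2/5:ℝ)^(n j - n k) * (2:ℝ)^(n j - n k)) := by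
              have hsplit : (2/5:ℝ)^(n j) = (2/5:ℝ)^(n j - n k) * (2/5:ℝ)^(n k) := by
                rw [← pow_add, Nat.sub_add_cancel (hn_mono k j hgt.le)]
              rw [hsplit]
              have hcancel : (5/2:ℝ)^(n k) * (2/5:ℝ)^(n k) = 1 := by
                rw [← mul_pow]
                norm_num
              field_simp
              linear_combination ‖f j‖ * hcancel
          _ = (3/2:ℝ)^(N j) * ‖f j‖ * (4/5:ℝ)^(n j - n k) := by
              rw [← mul_pow]
              norm_num
          _ ≤ C j * (5/6:ℝ)^(n j - n k) := by
              refine mul_le_mul ?_ (pow_le_pow_left₀ (by norm_num) (by norm_num) _)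
                (by positivity) (hCpos j).le
              rw [hC]
              refine mul_le_mul_of_nonneg_left (by linarith) (by positivity)
          _ ≤ Cb j * (5/6:ℝ)^(g j) := by
              refine mul_le_mul (hCle j j le_rfl) ?_ (by positivity) (hCbpos j).le
              exact pow_le_pow_of_le_one (by norm_num) (by norm_num) hd
          _ ≤ (1/2:ℝ)^j := hgle j
    -- sum the error terms
    set B : ℕ → ℝ := fun j => if j ≤ k then (1/2:ℝ)^k else (1/2:ℝ)^j with hB
    have hB_sum : Summable B := by
      refine Summable.of_nonneg_of_le (fun j => by rw [hB]; dsimp only; split <;> positivity)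
        (fun j => ?_) (summable_geometric_of_lt_one (by norm_num) (by norm_num : (1/2:ℝ) < 1))
      rw [hB]
      dsimp only
      split
      · exact pow_le_pow_of_le_one (by norm_num) (by norm_num) (by assumption)
      · exact le_rfl
    have hite_le : ∀ j, ‖(if j = k then 0 else G (u j))‖ ≤ B j := by
      intro j
      by_cases h : j = k
      · rw [if_pos h, norm_zero, hB]
        dsimp only
        rw [if_pos (by omega : j ≤ k)]
        positivity
      · rw [if_neg h]
        exact hvj j h
    have hite_sum : Summable (fun j => ‖(if j = k then 0 else G (u j))‖) :=
      Summable.of_nonneg_of_le (fun j => norm_nonneg _) hite_le hB_sum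
    have heq : G x - f k = ∑' j, (if j = k then 0 else G (u j)) := by
      rw [hGx, Summable.tsum_eq_add_tsum_ite hGsum k, hvk, add_sub_cancel_left]
    have hBtail : ∑' i : ℕ, B (i + (k+1)) = (1/2:ℝ)^k := by
      have h1 : ∀ i : ℕ, B (i + (k+1)) = (1/2:ℝ)^(k+1) * (1/2:ℝ)^i := by
        intro i
        rw [hB]
        dsimp only
        rw [if_neg (by omega), pow_add]
        ring
      rw [tsum_congr h1, tsum_mul_left,
        tsum_geometric_of_lt_one (by norm_num) (by norm_num : (1/2:ℝ) < 1), pow_succ]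
      norm_num
      ring
    have hBsum_val : ∑' j, B j = ((k:ℝ) + 2) * (1/2:ℝ)^k := by
      rw [← Summable.sum_add_tsum_nat_add (k+1) hB_sum, hBtail]
      have hcong : ∀ i ∈ Finset.range (k+1), B i = (1/2:ℝ)^k := by
        intro i hi
        have hik : i ≤ k := by
          have := Finset.mem_range.1 hi
          omega
        rw [hB]
        dsimp only
        rw [if_pos hik]
      rw [Finset.sum_congr rfl hcong, Finset.sum_const, nsmul_eq_mul, Finset.card_range]
      push_cast
      ring
    have hGx0 : G x = (a k)⁻¹ • (T ^ (n k)) x := rfl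
    rw [← hGx0]
    calc ‖G x - f k‖ = ‖∑' j, (if j = k then 0 else G (u j))‖ := by rw [heq]
      _ ≤ ∑' j, ‖(if j = k then 0 else G (u j))‖ := norm_tsum_le_tsum_norm hite_sum
      _ ≤ ∑' j, B j := Summable.tsum_le_tsum hite_le hite_sum hB_sum
      _ = ((k:ℝ) + 2) * (1/2:ℝ)^k := hBsum_val
  -- density of the scaled orbit
  rw [Metric.dense_iff]
  intro y r hr
  have htend : Tendsto (fun k : ℕ => ((k:ℝ)+2) * (1/2:ℝ)^k) atTop (𝓝 0) := by
    have h1 := tendsto_self_mul_const_pow_of_lt_one (by norm_num : (0:ℝ) ≤ 1/2)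
      (by norm_num : (1/2:ℝ) < 1)
    have h2 := (tendsto_pow_atTop_nhds_zero_of_lt_one (by norm_num : (0:ℝ) ≤ 1/2)
      (by norm_num : (1/2:ℝ) < 1)).const_mul (2:ℝ)
    have h3 := h1.add h2
    norm_num at h3
    refine h3.congr (fun k => ?_)
    ring
  have hev : ∀ᶠ k : ℕ in atTop, ((k:ℝ)+2) * (1/2:ℝ)^k < r/2 :=
    Filter.Tendsto.eventually_lt_const (by linarith : (0:ℝ) < r/2) htend
  obtain ⟨K, hK⟩ := eventually_atTop.1 hev
  obtain ⟨k, hkK, hkf⟩ := hdense y (r/2) (by linarith) K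
  refine ⟨(a k)⁻¹ • (T ^ (n k)) x, Metric.mem_ball.2 ?_, ⟨n k, (a k)⁻¹, rfl⟩⟩
  rw [dist_eq_norm]
  calc ‖(a k)⁻¹ • (T ^ (n k)) x - y‖
      = ‖((a k)⁻¹ • (T ^ (n k)) x - f k) + (f k - y)‖ := by rw [sub_add_sub_cancel]
    _ ≤ ‖(a k)⁻¹ • (T ^ (n k)) x - f k‖ + ‖f k - y‖ := norm_add_le _ _
    _ < r/2 + r/2 := add_lt_add_of_le_of_lt (le_trans (hkey k) (hK k hkK).le) hkf
    _ = r := by ring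

end St13

theorem stmt13
    (T : lp (fun _ : ℤ => ℂ) 2 →L[ℂ] lp (fun _ : ℤ => ℂ) 2)
    (hT : ∀ (x : lp (fun _ : ℤ => ℂ) 2) (n : ℤ),
      (T x : ∀ _ : ℤ, ℂ) n =
        ((if 0 ≤ n - 1 then (1/3 : ℂ) else 1/2) * (x : ∀ _ : ℤ, ℂ) (n - 1))) :
    Supercyclic T ∧ ¬ DiskCyclic T := by
  exact ⟨St13.supercyclic T hT, St13.not_disk T hT⟩
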